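/- Let O ⊆ ℝᵈ be an open set, ε > 0, and let u : ℝᵈ → ℝ be twice continuously differentiable on O with 0 < |u(x)| < 1 for every x ∈ O, satisfying the semilinear equation −ε·Δu(x) + u(x) − sign(u(x)) = 0 for all x ∈ O. Define w : O → ℝ by w(x) = −√ε · log(1 − |u(x)|) · sign(u(x)). Then w is twice continuously differentiable on O and satisfies the viscosity Eikonal equation −√ε·Δw(x) + sign(u(x))·(‖∇w(x)‖² − 1) = 0 for every x ∈ O. -/

import Mathlib

open MeasureTheory Filter Topology Metric Set

/-- sign function: `1` for positive, `-1` otherwise (only used at nonzero arguments). -/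
noncomputable def sgn (s : ℝ) : ℝ := if 0 < s then 1 else -1

/-- Laplacian: sum of the second partial derivatives along the standard basis. -/
noncomputable def laplacian {d : ℕ} (f : EuclideanSpace ℝ (Fin d) → ℝ)
    (x : EuclideanSpace ℝ (Fin d)) : ℝ :=
  ∑ i : Fin d, fderiv ℝ (fun y => fderiv ℝ f y (EuclideanSpace.single i 1)) x
    (EuclideanSpace.single i 1)

lemma sgn_cases (s : ℝ) : sgn s = 1 ∨ sgn s = -1 := by
  unfold sgn; split <;> simp

lemma sgn_mul_self {s : ℝ} (hs : s ≠ 0) : sgn s * s = |s| := by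
  unfold sgn; rcases lt_or_gt_of_ne hs with h | h
  · rw [if_neg (not_lt.2 h.le), abs_of_neg h]; ring
  · rw [if_pos h, abs_of_pos h]; ring

lemma sgn_sq (s : ℝ) : sgn s * sgn s = 1 := by
  rcases sgn_cases s with h | h <;> rw [h] <;> norm_num

lemma grad_norm_sq {d : ℕ} (f : EuclideanSpace ℝ (Fin d) → ℝ) (x : EuclideanSpace ℝ (Fin d)) :
    ‖gradient f x‖ ^ 2 = ∑ i : Fin d, (fderiv ℝ f x (EuclideanSpace.single i 1)) ^ 2 := by
  have h1 : ∀ i : Fin d, (gradient f x) i = fderiv ℝ f x (EuclideanSpace.single i 1) := by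
    intro i
    have : inner ℝ (gradient f x) (EuclideanSpace.single i (1:ℝ))
        = fderiv ℝ f x (EuclideanSpace.single i 1) := InnerProductSpace.toDual_symm_apply
    rw [← this, real_inner_comm, EuclideanSpace.inner_single_left]
    simp
  rw [EuclideanSpace.norm_eq, Real.sq_sqrt (by positivity)]
  congr 1; ext i; rw [h1]; simp [sq_abs]

lemma exists_nbhd {d : ℕ} {O : Set (EuclideanSpace ℝ (Fin d))} (hO : IsOpen O)
    {u : EuclideanSpace ℝ (Fin d) → ℝ} (hu : ContinuousOn u O)
    (hub : ∀ x ∈ O, 0 < |u x| ∧ |u x| < 1) {x : EuclideanSpace ℝ (Fin d)} (hx : x ∈ O) :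
    ∃ V, IsOpen V ∧ x ∈ V ∧ V ⊆ O ∧
      ∀ y ∈ V, sgn (u y) = sgn (u x) ∧ |u y| = sgn (u x) * u y ∧
        0 < 1 - sgn (u x) * u y := by
  set σ := sgn (u x) with hσdef
  refine ⟨O ∩ (fun y => σ * u y) ⁻¹' Ioi 0,
    (continuousOn_const.mul hu).isOpen_inter_preimage hO isOpen_Ioi, ⟨hx, ?_⟩,
    inter_subset_left, ?_⟩
  · have h0 : u x ≠ 0 := by
      intro h; have := (hub x hx).1; rw [h] at this; simp at this
    have := sgn_mul_self h0
    show 0 < σ * u x; rw [hσdef, this]; exact (hub x hx).1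
  · rintro y ⟨hyO, hypos⟩
    simp only [Set.mem_preimage, Set.mem_Ioi] at hypos
    have hsgn : sgn (u y) = σ := by
      rcases sgn_cases (u x) with h | h
      · rw [← hσdef] at h; rw [h] at hypos ⊢; rw [h] at hσdef
        unfold sgn; rw [if_pos (by linarith)]
      · rw [← hσdef] at h; rw [h] at hypos ⊢
        have : u y < 0 := by nlinarith
        unfold sgn; rw [if_neg (not_lt.2 this.le)]
    have habs : |u y| = σ * u y := by
      rw [← hsgn]; rw [sgn_mul_self]
      intro h; rw [h] at hypos; simp at hypos
    exact ⟨hsgn, habs, by have := (hub y hyO).2; linarith [habs ▸ this]⟩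

theorem stmt0 {d : ℕ} (O : Set (EuclideanSpace ℝ (Fin d))) (hO : IsOpen O)
    (ε : ℝ) (hε : 0 < ε) (u : EuclideanSpace ℝ (Fin d) → ℝ)
    (hu : ContDiffOn ℝ 2 u O)
    (hub : ∀ x ∈ O, 0 < |u x| ∧ |u x| < 1)
    (heq : ∀ x ∈ O, -ε * laplacian u x + u x - sgn (u x) = 0)
    (w : EuclideanSpace ℝ (Fin d) → ℝ)
    (hw : ∀ x, w x = -Real.sqrt ε * Real.log (1 - |u x|) * sgn (u x)) :
    ContDiffOn ℝ 2 w O ∧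
    ∀ x ∈ O, -Real.sqrt ε * laplacian w x + sgn (u x) * (‖gradient w x‖ ^ 2 - 1) = 0 := by
  set c := Real.sqrt ε with hcdef
  have hc2 : c * c = ε := Real.mul_self_sqrt hε.le
  -- main local analysis, packaged once
  have key : ∀ x ∈ O,
      ContDiffAt ℝ 2 w x ∧
      (-c * laplacian w x + sgn (u x) * (‖gradient w x‖ ^ 2 - 1) = 0) := by
    intro x hx
    obtain ⟨V, hVopen, hxV, hVO, hVprop⟩ := exists_nbhd hO hu.continuousOn hub hx
    set σ := sgn (u x) with hσdef
    have hσ2 : σ * σ = 1 := sgn_sq (u x)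
    set g : EuclideanSpace ℝ (Fin d) → ℝ := fun y => 1 - σ * u y with hgdef
    have hgpos : ∀ y ∈ V, 0 < g y := fun y hy => (hVprop y hy).2.2
    have hgx : 0 < g x := hgpos x hxV
    -- local representation of w
    have hwloc : ∀ y ∈ V, w y = (-σ * c) * Real.log (g y) := by
      intro y hy
      obtain ⟨h1, h2, _⟩ := hVprop y hy
      rw [hw y, h1, h2]; ring
    have hwev : w =ᶠ[𝓝 x] fun y => (-σ * c) * Real.log (g y) :=
      eventually_of_mem (hVopen.mem_nhds hxV) hwloc
    -- derivatives of u on V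
    have hud : ∀ y ∈ V, HasFDerivAt u (fderiv ℝ u y) y := fun y hy =>
      ((hu.contDiffAt (hO.mem_nhds (hVO hy))).differentiableAt (by norm_num)).hasFDerivAt
    have hgd : ∀ y ∈ V, HasFDerivAt g ((-σ) • fderiv ℝ u y) y := by
      intro y hy
      have := (hasFDerivAt_const (1:ℝ) y).sub ((hud y hy).const_mul σ)
      rw [zero_sub, ← neg_smul] at this
      exact this
    -- derivative of w on V
    have hwd : ∀ y ∈ V, HasFDerivAt w ((c * (g y)⁻¹) • fderiv ℝ u y) y := by
      intro y hy
      have h1 : HasFDerivAt (fun z => (-σ * c) * Real.log (g z))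
          ((-σ * c) • ((g y)⁻¹ • ((-σ) • fderiv ℝ u y))) y :=
        ((hgd y hy).log (hgpos y hy).ne').const_mul _
      have h2 : HasFDerivAt w ((-σ * c) • ((g y)⁻¹ • ((-σ) • fderiv ℝ u y))) y :=
        h1.congr_of_eventuallyEq (eventually_of_mem (hVopen.mem_nhds hy) hwloc)
      convert h2 using 1
      ext v
      simp only [ContinuousLinearMap.coe_smul', Pi.smul_apply, smul_eq_mul]
      linear_combination (-c * (1 - σ * u y)⁻¹ * ((fderiv ℝ u y) v)) * hσ2
    have hfw : ∀ y ∈ V, fderiv ℝ w y = (c * (g y)⁻¹) • fderiv ℝ u y :=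
      fun y hy => (hwd y hy).fderiv
    constructor
    · -- ContDiffAt
      have hgc : ContDiffAt ℝ 2 g x :=
        contDiffAt_const.sub (contDiffAt_const.mul (hu.contDiffAt (hO.mem_nhds hx)))
      exact (contDiffAt_const.mul (hgc.log hgx.ne')).congr_of_eventuallyEq hwev
    · -- the PDE
      set U := fderiv ℝ u x with hUdef
      set S := ∑ i : Fin d, (U (EuclideanSpace.single i 1)) ^ 2 with hSdef
      -- second derivative term
      have hterm : ∀ i : Fin d,
          fderiv ℝ (fun y => fderiv ℝ w y (EuclideanSpace.single i 1)) x
            (EuclideanSpace.single i 1)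
          = c * (g x)⁻¹ *
              (fderiv ℝ (fun y => fderiv ℝ u y (EuclideanSpace.single i 1)) x
                (EuclideanSpace.single i 1))
            + c * σ * ((g x) ^ 2)⁻¹ * (U (EuclideanSpace.single i 1)) ^ 2 := by
        intro i
        set e := EuclideanSpace.single i (1:ℝ) with hedef
        set ψ : EuclideanSpace ℝ (Fin d) → ℝ := fun y => fderiv ℝ u y e with hψdef
        have hψ1 : ContDiffAt ℝ 1 ψ x :=
          ((hu.contDiffAt (hO.mem_nhds hx)).fderiv_right (by norm_num)).clm_apply
            contDiffAt_const
        have hψd : HasFDerivAt ψ (fderiv ℝ ψ x) x :=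
          (hψ1.differentiableAt one_ne_zero).hasFDerivAt
        have hinv : HasFDerivAt (fun y => (g y)⁻¹)
            ((-(g x ^ 2)⁻¹) • ((-σ) • fderiv ℝ u x)) x :=
          (hasDerivAt_inv hgx.ne').comp_hasFDerivAt x (hgd x hxV)
        have hF : HasFDerivAt (fun y => (c * (g y)⁻¹) * ψ y)
            ((c * (g x)⁻¹) • fderiv ℝ ψ x
              + ψ x • (c • ((-(g x ^ 2)⁻¹) • ((-σ) • fderiv ℝ u x)))) x := by
          exact (hinv.const_mul c).mul hψd
        have hev : (fun y => fderiv ℝ w y e) =ᶠ[𝓝 x] fun y => (c * (g y)⁻¹) * ψ y := by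
          refine eventually_of_mem (hVopen.mem_nhds hxV) fun y hy => ?_
          show (fderiv ℝ w y) e = c * (g y)⁻¹ * ψ y
          rw [hfw y hy]; simp [hψdef]
        rw [hev.fderiv_eq, hF.fderiv]
        simp only [ContinuousLinearMap.add_apply, ContinuousLinearMap.coe_smul',
          Pi.smul_apply, smul_eq_mul]
        have hψx : ψ x = U e := rfl
        rw [hψx]
        ring
      have hlapw : laplacian w x = c * (g x)⁻¹ * laplacian u x + c * σ * ((g x) ^ 2)⁻¹ * S := by
        unfold laplacian
        rw [Finset.sum_congr rfl fun i _ => hterm i, Finset.sum_add_distrib,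
          ← Finset.mul_sum, hSdef, ← Finset.mul_sum]
      have hgradw : ‖gradient w x‖ ^ 2 = c * c * ((g x) ^ 2)⁻¹ * S := by
        rw [grad_norm_sq]
        rw [hSdef, Finset.mul_sum]
        refine Finset.sum_congr rfl fun i _ => ?_
        rw [hfw x hxV]
        simp only [ContinuousLinearMap.coe_smul', Pi.smul_apply, smul_eq_mul]
        rw [← hUdef]
        field_simp
      have hεL : ε * laplacian u x = u x - σ := by
        have := heq x hx; linarith
      rw [hlapw, hgradw]
      have h3 : u x - σ = -σ * g x := by
        have hgxeq : g x = 1 - σ * u x := rfl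
        rw [hgxeq]; linear_combination (-u x) * hσ2
      have h4 : -c * (c * (g x)⁻¹ * laplacian u x + c * σ * (g x ^ 2)⁻¹ * S)
          + σ * (c * c * (g x ^ 2)⁻¹ * S - 1)
          = -((ε * laplacian u x) * (g x)⁻¹) - σ := by
        rw [← hc2]; ring
      rw [h4, hεL, h3]
      field_simp
      ring
  refine ⟨fun x hx => (key x hx).1.contDiffWithinAt, fun x hx => (key x hx).2⟩
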